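/- Let L be a real symmetric positive definite N×N matrix, and let β, M̂ > 0 and σ̂² ≥ 0. The matrix P = (2β/M̂ - σ̂²β²)I - σ̂²M̂·L is positive definite if and only if σ̂² < 2β / (M̂(β² + λ_max(L)·M̂)). -/

import Mathlib

open Matrix

private lemma posDef_conj_unitary {n : Type*} [Fintype n] [DecidableEq n]
    (U : Matrix.unitaryGroup n ℝ) {B : Matrix n n ℝ} (hB : B.PosDef) :
    ((U : Matrix n n ℝ) * B * star (U : Matrix n n ℝ)).PosDef := by
  have hUU : (U : Matrix n n ℝ) * star (U : Matrix n n ℝ) = 1 :=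
    Matrix.mem_unitaryGroup_iff.mp U.2
  have hUU' : star (U : Matrix n n ℝ) * (U : Matrix n n ℝ) = 1 :=
    Matrix.mem_unitaryGroup_iff'.mp U.2
  rw [Matrix.posDef_iff_dotProduct_mulVec]
  constructor
  · have : ((U : Matrix n n ℝ) * B * star (U : Matrix n n ℝ))ᴴ
        = (U : Matrix n n ℝ) * Bᴴ * star (U : Matrix n n ℝ) := by
      simp [Matrix.conjTranspose_mul, Matrix.mul_assoc, Matrix.star_eq_conjTranspose]
    rw [Matrix.IsHermitian, this, hB.1.eq]
  · intro x hx
    set y := star (U : Matrix n n ℝ) *ᵥ x with hy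
    have hyne : y ≠ 0 := by
      intro h
      apply hx
      have : (U : Matrix n n ℝ) *ᵥ y = x := by
        rw [hy, Matrix.mulVec_mulVec, hUU, Matrix.one_mulVec]
      rw [← this, h, Matrix.mulVec_zero]
    have key : star x ⬝ᵥ (((U : Matrix n n ℝ) * B * star (U : Matrix n n ℝ)) *ᵥ x)
        = star y ⬝ᵥ (B *ᵥ y) := by
      rw [hy, ← Matrix.mulVec_mulVec, ← Matrix.mulVec_mulVec]
      rw [Matrix.dotProduct_mulVec (star x), Matrix.star_mulVec]
      rfl
    rw [key]
    exact (Matrix.posDef_iff_dotProduct_mulVec.mp hB).2 hyne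

private lemma shift_spectral {n : Type*} [Fintype n] [DecidableEq n]
    {A : Matrix n n ℝ} (hA : A.IsHermitian) (c d : ℝ) :
    c • (1 : Matrix n n ℝ) - d • A
      = (hA.eigenvectorUnitary : Matrix n n ℝ)
        * Matrix.diagonal (fun i => c - d * hA.eigenvalues i)
        * star (hA.eigenvectorUnitary : Matrix n n ℝ) := by
  have hUU : (hA.eigenvectorUnitary : Matrix n n ℝ)
      * star (hA.eigenvectorUnitary : Matrix n n ℝ) = 1 :=
    Matrix.mem_unitaryGroup_iff.mp hA.eigenvectorUnitary.2
  have hdiag : Matrix.diagonal (fun i => c - d * hA.eigenvalues i)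
      = c • (1 : Matrix n n ℝ) - d • Matrix.diagonal hA.eigenvalues := by
    ext i j
    by_cases h : i = j
    · subst h; simp [Matrix.diagonal_apply_eq, Matrix.one_apply_eq]
    · simp [Matrix.diagonal_apply_ne _ h, Matrix.one_apply_ne h]
  rw [hdiag, Matrix.mul_sub, Matrix.sub_mul, Matrix.mul_smul, Matrix.smul_mul,
    Matrix.mul_smul, Matrix.smul_mul, Matrix.mul_one, hUU]
  have hspec := hA.spectral_theorem
  have hD : Matrix.diagonal ((RCLike.ofReal : ℝ → ℝ) ∘ hA.eigenvalues)
      = Matrix.diagonal hA.eigenvalues := by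
    congr 1
  rw [hD, Unitary.conjStarAlgAut_apply] at hspec
  rw [← hspec]

private lemma shift_posDef_iff {n : Type*} [Fintype n] [DecidableEq n] [Nonempty n]
    {A : Matrix n n ℝ} (hA : A.IsHermitian) (c d : ℝ) :
    (c • (1 : Matrix n n ℝ) - d • A).PosDef ↔ ∀ i, 0 < c - d * hA.eigenvalues i := by
  rw [shift_spectral hA c d]
  constructor
  · intro h
    have h2 := posDef_conj_unitary (star hA.eigenvectorUnitary) h
    have hUU : (hA.eigenvectorUnitary : Matrix n n ℝ)
        * star (hA.eigenvectorUnitary : Matrix n n ℝ) = 1 :=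
      Matrix.mem_unitaryGroup_iff.mp hA.eigenvectorUnitary.2
    have hUU' : star (hA.eigenvectorUnitary : Matrix n n ℝ)
        * (hA.eigenvectorUnitary : Matrix n n ℝ) = 1 :=
      Matrix.mem_unitaryGroup_iff'.mp hA.eigenvectorUnitary.2
    simp only [Unitary.coe_star] at h2
    have heq : star (hA.eigenvectorUnitary : Matrix n n ℝ)
        * ((hA.eigenvectorUnitary : Matrix n n ℝ)
          * Matrix.diagonal (fun i => c - d * hA.eigenvalues i)
          * star (hA.eigenvectorUnitary : Matrix n n ℝ))
        * star (star (hA.eigenvectorUnitary : Matrix n n ℝ))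
        = Matrix.diagonal (fun i => c - d * hA.eigenvalues i) := by
      rw [star_star]
      rw [← Matrix.mul_assoc, ← Matrix.mul_assoc, hUU', Matrix.one_mul,
        Matrix.mul_assoc, hUU', Matrix.mul_one]
    rw [heq] at h2
    exact (Matrix.posDef_diagonal_iff).mp h2
  · intro h
    exact posDef_conj_unitary hA.eigenvectorUnitary
      ((Matrix.posDef_diagonal_iff).mpr h)

/-- Mean-square stability condition: `P = (2β/M̂ - σ̂²β²)I - σ̂²M̂·L` is positive definite
iff `σ̂² < 2β / (M̂(β² + λ_max(L)·M̂))`. -/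
theorem stmt3 {N : ℕ} (hN : 0 < N) (L : Matrix (Fin N) (Fin N) ℝ) (hL : L.PosDef)
    (β M σ2 : ℝ) (hβ : 0 < β) (hM : 0 < M) (hσ : 0 ≤ σ2) :
    ((2 * β / M - σ2 * β ^ 2) • (1 : Matrix (Fin N) (Fin N) ℝ) - (σ2 * M) • L).PosDef ↔
      σ2 < 2 * β / (M * (β ^ 2 + (⨆ j, hL.1.eigenvalues j) * M)) := by
  haveI : Nonempty (Fin N) := ⟨⟨0, hN⟩⟩
  obtain ⟨j0, hj0⟩ : ∃ j0, (⨆ j, hL.1.eigenvalues j) = hL.1.eigenvalues j0 := by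
    obtain ⟨j0, hj0⟩ := Finite.exists_max hL.1.eigenvalues
    exact ⟨j0, le_antisymm (ciSup_le hj0)
      (le_ciSup (Set.finite_range hL.1.eigenvalues).bddAbove j0)⟩
  set lam : ℝ := ⨆ j, hL.1.eigenvalues j with hlam
  have hle : ∀ i, hL.1.eigenvalues i ≤ lam :=
    fun i => le_ciSup (Set.finite_range hL.1.eigenvalues).bddAbove i
  have hpos : 0 < lam := hj0 ▸ hL.eigenvalues_pos j0
  have hden : 0 < M * (β ^ 2 + lam * M) := by positivity
  rw [shift_posDef_iff hL.1]
  constructor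
  · intro h
    have h0 := h j0
    rw [← hj0] at h0
    rw [lt_div_iff₀ hden]
    have h3 : 2 * β / M * M = 2 * β := div_mul_cancel₀ _ hM.ne'
    nlinarith [mul_pos h0 hM, h3]
  · intro h i
    rw [lt_div_iff₀ hden] at h
    have h1 : σ2 * M * hL.1.eigenvalues i * M ≤ σ2 * M * lam * M := by
      have := mul_le_mul_of_nonneg_left (hle i) (by positivity : (0:ℝ) ≤ σ2 * M)
      nlinarith
    have hnum : 0 < 2 * β - σ2 * β ^ 2 * M - σ2 * M * hL.1.eigenvalues i * M := by
      nlinarith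
    have heq : 2 * β / M - σ2 * β ^ 2 - σ2 * M * hL.1.eigenvalues i
        = (2 * β - σ2 * β ^ 2 * M - σ2 * M * hL.1.eigenvalues i * M) / M := by
      field_simp
    rw [heq]
    exact div_pos hnum hM
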